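/- There is an absolute constant C such that the following holds. Let D be a finite directed acyclic graph on n ≥ 2 vertices and let t be a vertex of D such that every vertex v ≠ t satisfies out-deg_D(v) ≥ 2·in-deg_D(v). Then for every vertex u ≠ t there exists a family of out-deg_D(u) pairwise edge-disjoint directed paths in D, each starting at u, ending at t, and having length at most C·log₂ n. -/

import Mathlib

open Finset
open scoped Classical

noncomputable section

universe u

variable {V : Type*} [Fintype V]

/-- The out-degree of `v` in the directed graph `D`. -/
def dOut (D : V → V → Prop) (v : V) : ℕ := {w : V | D v w}.ncard

/-- The in-degree of `v` in the directed graph `D`. -/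
def dIn (D : V → V → Prop) (v : V) : ℕ := {u : V | D u v}.ncard

section Aux

universe v

variable {W : Type v}

private lemma walk_transGen {D : W → W → Prop} {k : ℕ} {f : Fin (k + 1) → W}
    (hstep : ∀ j : Fin k, D (f j.castSucc) (f j.succ)) :
    ∀ (b a : ℕ) (hb : b ≤ k) (h : a < b),
      Relation.TransGen D (f ⟨a, by omega⟩) (f ⟨b, by omega⟩) := by
  intro b
  induction b with
  | zero => intro a _ h; omega
  | succ c ih =>
    intro a hb h
    have hstep' : D (f ⟨c, by omega⟩) (f ⟨c + 1, by omega⟩) := by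
      have h2 := hstep ⟨c, by omega⟩
      simpa [Fin.castSucc_mk, Fin.succ_mk] using h2
    rcases Nat.lt_or_ge a c with h' | h'
    · exact (ih a (by omega) h').tail hstep'
    · have : a = c := by omega
      subst this
      exact Relation.TransGen.single hstep'

private lemma walk_inj {D : W → W → Prop} {k : ℕ} {f : Fin (k + 1) → W}
    (hacyc : ∀ x, ¬ Relation.TransGen D x x)
    (hstep : ∀ j : Fin k, D (f j.castSucc) (f j.succ)) :
    Function.Injective f := by
  have key : ∀ a b : Fin (k + 1), (a : ℕ) < (b : ℕ) → f a ≠ f b := by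
    intro a b hab hfe
    have h2 := walk_transGen hstep (b : ℕ) (a : ℕ) (by omega) hab
    rw [Fin.eta, Fin.eta, hfe] at h2
    exact hacyc _ h2
  intro a b hfe
  rcases lt_trichotomy ((a : ℕ)) ((b : ℕ)) with h | h | h
  · exact absurd hfe (key a b h)
  · exact Fin.ext h
  · exact absurd hfe.symm (key b a h)

variable (D : W → W → Prop) (t : W)

private def stepE (Φ : ∀ v : W, v ≠ t → (({x // D x v} × Bool) ↪ {w // D v w}))
    (e : {p : W × W // D p.1 p.2}) (b : Bool) : {p : W × W // D p.1 p.2} :=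
  if h : e.1.2 ≠ t then
    ⟨(e.1.2, (Φ e.1.2 h (⟨e.1.1, e.2⟩, b)).1), (Φ e.1.2 h (⟨e.1.1, e.2⟩, b)).2⟩
  else e

variable (Φ : ∀ v : W, v ≠ t → (({x // D x v} × Bool) ↪ {w // D v w}))

private lemma stepE_fst {e : {p : W × W // D p.1 p.2}} (h : e.1.2 ≠ t) (b : Bool) :
    (stepE D t Φ e b).1.1 = e.1.2 := by
  simp [stepE, h]

private lemma stepE_inj {p q : {p : W × W // D p.1 p.2}} {b b' : Bool}
    (hp : p.1.2 ≠ t) (hq : q.1.2 ≠ t)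
    (hst : stepE D t Φ p b = stepE D t Φ q b') : p = q ∧ b = b' := by
  obtain ⟨⟨x, v⟩, hxv⟩ := p
  obtain ⟨⟨y, w⟩, hyw⟩ := q
  simp only at hp hq
  rw [stepE, stepE, dif_pos hp, dif_pos hq] at hst
  have hvw : v = w := congrArg (fun e => e.1.1) hst
  subst hvw
  have h2 : ((Φ v hp (⟨x, hxv⟩, b)) : {w // D v w}) = Φ v hq (⟨y, hyw⟩, b') := by
    apply Subtype.ext
    exact congrArg (fun e => e.1.2) hst
  rw [Subsingleton.elim hq hp] at h2
  have h3 := (Φ v hp).injective h2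
  have hx : x = y := congrArg (fun z => (z.1 : W)) h3
  have hb : b = b' := congrArg Prod.snd h3
  subst hx
  exact ⟨rfl, hb⟩

private def ChildE (p q : {p : W × W // D p.1 p.2}) : Prop :=
  p.1.2 ≠ t ∧ ∃ b, stepE D t Φ p b = q

private lemma childE_fst {p q : {p : W × W // D p.1 p.2}} (h : ChildE D t Φ p q) :
    q.1.1 = p.1.2 := by
  obtain ⟨hp, b, hb⟩ := h
  rw [← hb]; exact stepE_fst D t Φ hp b

private lemma childE_D {p q : {p : W × W // D p.1 p.2}} (h : ChildE D t Φ p q) :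
    D p.1.2 q.1.2 := by
  have := childE_fst D t Φ h
  have h2 := q.2
  rwa [this] at h2

private lemma childE_unique {p q a : {p : W × W // D p.1 p.2}}
    (h1 : ChildE D t Φ p a) (h2 : ChildE D t Φ q a) : p = q := by
  obtain ⟨hp, b, hb⟩ := h1
  obtain ⟨hq, b', hb'⟩ := h2
  exact (stepE_inj D t Φ hp hq (hb.trans hb'.symm)).1

private lemma childE_transD {p q : {p : W × W // D p.1 p.2}}
    (h : Relation.TransGen (ChildE D t Φ) p q) :
    Relation.TransGen D p.1.2 q.1.2 := by
  induction h with
  | single h' => exact Relation.TransGen.single (childE_D D t Φ h')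
  | tail _ h' ih => exact ih.tail (childE_D D t Φ h')

private lemma childE_comparable {p q a : {p : W × W // D p.1 p.2}}
    (h1 : Relation.ReflTransGen (ChildE D t Φ) p a)
    (h2 : Relation.ReflTransGen (ChildE D t Φ) q a) :
    Relation.ReflTransGen (ChildE D t Φ) p q ∨ Relation.ReflTransGen (ChildE D t Φ) q p := by
  induction h1 with
  | refl => exact Or.inr h2
  | @tail b c hpb hbc ih =>
    rcases Relation.ReflTransGen.cases_tail h2 with h | ⟨d, hqd, hdc⟩
    · subst h
      exact Or.inl (hpb.tail hbc)
    · rw [childE_unique D t Φ hdc hbc] at hqd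
      exact ih hqd

private def chainE (e : {p : W × W // D p.1 p.2}) (s : List Bool) :
    {p : W × W // D p.1 p.2} :=
  s.foldr (fun b a => stepE D t Φ a b) e

private lemma chainE_nil (e : {p : W × W // D p.1 p.2}) : chainE D t Φ e [] = e := rfl

private lemma chainE_cons (e : {p : W × W // D p.1 p.2}) (b : Bool) (s : List Bool) :
    chainE D t Φ e (b :: s) = stepE D t Φ (chainE D t Φ e s) b := rfl

private lemma chainE_rtg (e : {p : W × W // D p.1 p.2}) (s : List Bool)
    (H : ∀ s' : List Bool, s'.length < s.length → (chainE D t Φ e s').1.2 ≠ t) :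
    Relation.ReflTransGen (ChildE D t Φ) e (chainE D t Φ e s) := by
  induction s with
  | nil => exact Relation.ReflTransGen.refl
  | cons b r ih =>
    refine Relation.ReflTransGen.tail (ih ?_) ?_
    · intro s' hs'; exact H s' (by simpa using Nat.lt_succ_of_lt hs')
    · exact ⟨H r (by simp), b, rfl⟩

private lemma chainE_injLen (e : {p : W × W // D p.1 p.2}) (L : ℕ)
    (H : ∀ s' : List Bool, s'.length < L → (chainE D t Φ e s').1.2 ≠ t) :
    ∀ s s' : List Bool, s.length = L → s'.length = L →
      chainE D t Φ e s = chainE D t Φ e s' → s = s' := by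
  induction L with
  | zero =>
    intro s s' hs hs' _
    rw [List.length_eq_zero_iff] at hs hs'
    rw [hs, hs']
  | succ L ih =>
    intro s s' hs hs' heq
    match s, s' with
    | b :: r, b' :: r' =>
      simp only [List.length_cons, Nat.succ.injEq] at hs hs'
      rw [chainE_cons, chainE_cons] at heq
      have hr : (chainE D t Φ e r).1.2 ≠ t := H r (by omega)
      have hr' : (chainE D t Φ e r').1.2 ≠ t := H r' (by omega)
      obtain ⟨h1, h2⟩ := stepE_inj D t Φ hr hr' heq
      have := ih (fun s' hs' => H s' (by omega)) r r' hs hs' h1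
      rw [this, h2]

end Aux

theorem statement9 :
    ∃ C : ℝ, 0 < C ∧
      ∀ (V : Type u) [Fintype V] (D : V → V → Prop) (t : V),
        2 ≤ Fintype.card V →
        (∀ v : V, ¬ Relation.TransGen D v v) →
        (∀ v : V, v ≠ t → 2 * dIn D v ≤ dOut D v) →
        ∀ u : V, u ≠ t →
          ∃ (k : Fin (dOut D u) → ℕ) (f : ∀ i, Fin (k i + 1) → V),
            (∀ i, f i 0 = u ∧ f i (Fin.last (k i)) = t ∧
              ((k i : ℝ) ≤ C * Real.logb 2 (Fintype.card V)) ∧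
              Function.Injective (f i) ∧
              ∀ j : Fin (k i), D (f i j.castSucc) (f i j.succ)) ∧
            (∀ i₁ i₂, i₁ ≠ i₂ → ∀ (j₁ : Fin (k i₁)) (j₂ : Fin (k i₂)),
              (f i₁ j₁.castSucc, f i₁ j₁.succ) ≠ (f i₂ j₂.castSucc, f i₂ j₂.succ)) := by
  refine ⟨5, by norm_num, ?_⟩
  intro V _ D t hn hacyc hdeg u hu
  set n := Fintype.card V with hnn
  set ℓ := Nat.log 2 n with hℓ
  have hℓ1 : 1 ≤ ℓ := Nat.log_pos one_lt_two hn
  -- the splitting embeddings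
  have hΦex : ∀ v : V, v ≠ t → Nonempty (({x // D x v} × Bool) ↪ {w // D v w}) := by
    intro v hv
    apply Function.Embedding.nonempty_of_card_le
    have h1 : dIn D v = Fintype.card {x // D x v} := by
      rw [dIn, ← Nat.card_coe_set_eq, Nat.card_eq_fintype_card]
      exact Fintype.card_congr (Equiv.subtypeEquivRight (fun x => Iff.rfl))
    have h2 : dOut D v = Fintype.card {w // D v w} := by
      rw [dOut, ← Nat.card_coe_set_eq, Nat.card_eq_fintype_card]
      exact Fintype.card_congr (Equiv.subtypeEquivRight (fun x => Iff.rfl))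
    have h3 := hdeg v hv
    rw [h1, h2] at h3
    rw [Fintype.card_prod, Fintype.card_bool]
    omega
  let Φ : ∀ v : V, v ≠ t → (({x // D x v} × Bool) ↪ {w // D v w}) :=
    fun v hv => (hΦex v hv).some
  -- counting: every edge reaches t quickly
  have hcardE : Fintype.card {p : V × V // D p.1 p.2} ≤ n * n := by
    calc Fintype.card {p : V × V // D p.1 p.2} ≤ Fintype.card (V × V) :=
          Fintype.card_subtype_le _
      _ = n * n := by rw [Fintype.card_prod]
  have hit : ∀ e : {p : V × V // D p.1 p.2}, ∃ s : List Bool,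
      s.length < 2 * ℓ + 2 ∧ (chainE D t Φ e s).1.2 = t := by
    intro e
    by_contra hcon
    push_neg at hcon
    have hinj : Function.Injective
        (fun v : Fin (2 * ℓ + 2) → Bool => chainE D t Φ e (List.ofFn v)) := by
      intro v v' h
      apply List.ofFn_injective
      exact chainE_injLen D t Φ e (2 * ℓ + 2) (fun s' hs' => hcon s' hs') _ _
        List.length_ofFn List.length_ofFn h
    have hcard := Fintype.card_le_of_injective _ hinj
    rw [Fintype.card_fun, Fintype.card_bool, Fintype.card_fin] at hcard
    have hc2 := le_trans hcard hcardE
    have hn2 : n < 2 ^ (ℓ + 1) := Nat.lt_pow_succ_log_self (by norm_num) n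
    have hm : n * n < 2 ^ (ℓ + 1) * 2 ^ (ℓ + 1) :=
      Nat.mul_lt_mul_of_lt_of_lt hn2 hn2
    have hpow : 2 ^ (ℓ + 1) * 2 ^ (ℓ + 1) = 2 ^ (2 * ℓ + 2) := by
      rw [← pow_add]; ring_nf
    rw [hpow] at hm
    exact absurd (lt_of_le_of_lt hc2 hm) (lt_irrefl _)
  -- minimal hit
  have hitmin : ∀ e : {p : V × V // D p.1 p.2}, ∃ s : List Bool,
      s.length < 2 * ℓ + 2 ∧ (chainE D t Φ e s).1.2 = t ∧
      ∀ s' : List Bool, s'.length < s.length → (chainE D t Φ e s').1.2 ≠ t := by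
    intro e
    obtain ⟨s0, hs0len, hs0⟩ := hit e
    have hP : ∃ m, ∃ s : List Bool, s.length = m ∧ (chainE D t Φ e s).1.2 = t :=
      ⟨s0.length, s0, rfl, hs0⟩
    obtain ⟨s, hslen, hst⟩ := Nat.find_spec hP
    refine ⟨s, ?_, hst, ?_⟩
    · have h1 : Nat.find hP ≤ s0.length := Nat.find_le ⟨s0, rfl, hs0⟩
      omega
    · intro s' hlt hs'
      exact Nat.find_min hP (by omega) ⟨s', rfl, hs'⟩
  -- the key per-edge path construction
  have KEY : ∀ e : {p : V × V // D p.1 p.2}, ∃ (m : ℕ) (f : Fin (m + 2) → V)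
      (ed : Fin (m + 1) → {p : V × V // D p.1 p.2}),
      m + 2 ≤ 2 * ℓ + 3 ∧ f 0 = e.1.1 ∧ f (Fin.last (m + 1)) = t ∧
      (∀ j : Fin (m + 1), (ed j).1.1 = f j.castSucc ∧ (ed j).1.2 = f j.succ) ∧
      (∀ j : Fin (m + 1), Relation.ReflTransGen (ChildE D t Φ) e (ed j)) ∧
      (∀ j : Fin (m + 1), D (f j.castSucc) (f j.succ)) := by
    intro e
    obtain ⟨s, hslen, hst, hmin⟩ := hitmin e
    set m := s.length with hm
    set Ed : ℕ → {p : V × V // D p.1 p.2} :=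
      fun j => chainE D t Φ e (s.drop (m - j)) with hEdDef
    have hEd0 : Ed 0 = e := by
      simp only [hEdDef, Nat.sub_zero, hm, List.drop_length]
      rfl
    have hEdlen : ∀ j, (s.drop (m - j)).length = m - (m - j) := by
      intro j; rw [List.length_drop, ← hm]
    have hchild : ∀ j, j < m → ChildE D t Φ (Ed j) (Ed (j + 1)) := by
      intro j hj
      have hdrop : s.drop (m - (j + 1)) = s[m - (j + 1)]'(by omega) :: s.drop (m - j) := by
        have h1 : m - (j + 1) + 1 = m - j := by omega
        rw [List.drop_eq_getElem_cons (by omega)]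
        exact congrArg (fun x => s[m - (j + 1)]'(by omega) :: List.drop x s) h1
      refine ⟨?_, s[m - (j + 1)]'(by omega), ?_⟩
      · apply hmin
        rw [hEdlen j]
        omega
      · simp only [hEdDef]
        rw [hdrop, chainE_cons]
    have hEdm : (Ed m).1.2 = t := by
      simp only [hEdDef, Nat.sub_self, List.drop_zero]
      exact hst
    have hrtg : ∀ j : ℕ, Relation.ReflTransGen (ChildE D t Φ) e (Ed j) := by
      intro j
      apply chainE_rtg
      intro s' hs'
      apply hmin
      rw [hEdlen j] at hs'
      omega
    have hfcast : ∀ j : Fin (m + 1),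
        (Fin.cases (motive := fun _ : Fin (m + 2) => V) e.1.1
          (fun i : Fin (m + 1) => (Ed (i : ℕ)).1.2)) j.castSucc = (Ed (j : ℕ)).1.1 := by
      intro j
      rcases j with ⟨jv, hjv⟩
      cases jv with
      | zero =>
        have h0 : Fin.castSucc (⟨0, hjv⟩ : Fin (m + 1)) = (0 : Fin (m + 2)) := rfl
        rw [h0, Fin.cases_zero]
        exact congrArg (fun z => z.1.1) hEd0.symm
      | succ i =>
        have h1 : Fin.castSucc (⟨i + 1, hjv⟩ : Fin (m + 1)) =
            Fin.succ (⟨i, by omega⟩ : Fin (m + 1)) := rfl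
        rw [h1, Fin.cases_succ]
        exact (childE_fst D t Φ (hchild i (by omega))).symm
    have hfsucc : ∀ j : Fin (m + 1),
        (Fin.cases (motive := fun _ : Fin (m + 2) => V) e.1.1
          (fun i : Fin (m + 1) => (Ed (i : ℕ)).1.2)) j.succ = (Ed (j : ℕ)).1.2 := by
      intro j
      rw [Fin.cases_succ]
    refine ⟨m, Fin.cases (motive := fun _ : Fin (m + 2) => V) e.1.1
        (fun i : Fin (m + 1) => (Ed (i : ℕ)).1.2),
      fun j => Ed (j : ℕ), by omega, ?_, ?_, ?_, fun j => hrtg (j : ℕ), ?_⟩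
    · exact Fin.cases_zero
    · have hl : Fin.last (m + 1) = Fin.succ (Fin.last m) := rfl
      rw [hl, Fin.cases_succ]
      exact hEdm
    · intro j
      exact ⟨(hfcast j).symm, (hfsucc j).symm⟩
    · intro j
      rw [hfcast j, hfsucc j]
      exact (Ed (j : ℕ)).2
  -- enumerate the out-edges of u
  have hcOut : Fintype.card {w // D u w} = dOut D u := by
    rw [dOut, ← Nat.card_coe_set_eq, Nat.card_eq_fintype_card]
    exact (Fintype.card_congr (Equiv.subtypeEquivRight (fun x => Iff.rfl))).symm
  let ι : Fin (dOut D u) → {w // D u w} := (Fintype.equivFinOfCardEq hcOut).symm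
  have hιinj : Function.Injective ι := (Fintype.equivFinOfCardEq hcOut).symm.injective
  let e0 : Fin (dOut D u) → {p : V × V // D p.1 p.2} :=
    fun i => ⟨(u, (ι i).1), (ι i).2⟩
  have hKEY := fun i => KEY (e0 i)
  choose m f ed hlen h0 hlast hpair hrtgE hstepE using hKEY
  refine ⟨fun i => m i + 1, f, ?_, ?_⟩
  · intro i
    refine ⟨h0 i, hlast i, ?_, walk_inj hacyc (hstepE i), hstepE i⟩
    -- length bound
    have hb1 : m i + 1 ≤ 2 * ℓ + 2 := by have := hlen i; omega
    have h2n : (2 : ℝ) ^ (ℓ : ℕ) ≤ (n : ℝ) := by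
      exact_mod_cast Nat.pow_log_le_self 2 (by omega)
    have hlogb : (ℓ : ℝ) ≤ Real.logb 2 (n : ℝ) := by
      have hpos : (0 : ℝ) < (2 : ℝ) ^ (ℓ : ℕ) := by positivity
      have hle := (Real.logb_le_logb (by norm_num : (1:ℝ) < 2) hpos
        (lt_of_lt_of_le hpos h2n)).2 h2n
      have heq : Real.logb 2 ((2 : ℝ) ^ (ℓ : ℕ)) = (ℓ : ℝ) := by
        rw [← Real.rpow_natCast, Real.logb_rpow] <;> norm_num
      rwa [heq] at hle
    have hcast : ((m i + 1 : ℕ) : ℝ) ≤ (2 * ℓ + 2 : ℕ) := by exact_mod_cast hb1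
    have hfin : ((2 * ℓ + 2 : ℕ) : ℝ) ≤ 5 * Real.logb 2 (n : ℝ) := by
      push_cast
      have hℓ1' : (1 : ℝ) ≤ (ℓ : ℝ) := by exact_mod_cast hℓ1
      nlinarith [hlogb, hℓ1']
    calc ((m i + 1 : ℕ) : ℝ) ≤ (2 * ℓ + 2 : ℕ) := hcast
      _ ≤ 5 * Real.logb 2 (n : ℝ) := hfin
  · intro i₁ i₂ hne j₁ j₂ heq
    have h1 : f i₁ j₁.castSucc = f i₂ j₂.castSucc := congrArg Prod.fst heq
    have h2 : f i₁ j₁.succ = f i₂ j₂.succ := congrArg Prod.snd heq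
    have hed : ed i₁ j₁ = ed i₂ j₂ := by
      apply Subtype.ext
      apply Prod.ext
      · rw [(hpair i₁ j₁).1, (hpair i₂ j₂).1, h1]
      · rw [(hpair i₁ j₁).2, (hpair i₂ j₂).2, h2]
    have hr2 : Relation.ReflTransGen (ChildE D t Φ) (e0 i₂) (ed i₁ j₁) := by
      rw [hed]; exact hrtgE i₂ j₂
    have hcomp := childE_comparable D t Φ (hrtgE i₁ j₁) hr2
    have hroot : ∀ a b : Fin (dOut D u), a ≠ b →
        ¬ Relation.ReflTransGen (ChildE D t Φ) (e0 a) (e0 b) := by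
      intro a b hab hr
      rcases Relation.ReflTransGen.cases_head hr with heq0 | ⟨c, hc, hcr⟩
      · apply hab
        apply hιinj
        apply Subtype.ext
        exact congrArg (fun z => z.1.2) heq0
      · have htr : Relation.TransGen (ChildE D t Φ) (e0 a) (e0 b) :=
          Relation.TransGen.head' hc hcr
        obtain ⟨p, hap, hpb⟩ := (Relation.TransGen.tail'_iff).1 htr
        have hpu : p.1.2 = u := (childE_fst D t Φ hpb).symm
        rcases Relation.ReflTransGen.cases_head hap with heq1 | ⟨c', hc', hcr'⟩
        · have hDuu : D u u := by
            have hp2 := p.2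
            rw [hpu] at hp2
            have h3 : p.1.1 = u := by rw [← heq1]
            rwa [h3] at hp2
          exact hacyc u (Relation.TransGen.single hDuu)
        · have htr2 : Relation.TransGen (ChildE D t Φ) (e0 a) p :=
            Relation.TransGen.head' hc' hcr'
          have hD2 := childE_transD D t Φ htr2
          rw [hpu] at hD2
          have hDu : D u (e0 a).1.2 := (e0 a).2
          exact hacyc u (Relation.TransGen.head hDu hD2)
    rcases hcomp with h | h
    · exact hroot i₁ i₂ hne h
    · exact hroot i₂ i₁ (Ne.symm hne) h
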